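/- If μ₁ ≠ μ₂ and, for each n ≥ 2, λ₂*(n) is a measurable minimizer over λ₂ ∈ [−1,1] of the cross-validation discrepancy D_n(λ₂) = ∑_{j=1}^n (X_{1j} − exp(Ȳ₁^{(−j)} + λ₂(Ȳ₂^{(−j)} − Ȳ₁^{(−j)}) + 1/2))², then λ₂*(n) → 0 in probability as n → ∞; equivalently, the cross-validated weight vector λ^{(cv)}(n) = (1 − λ₂*(n), λ₂*(n)) converges in probability to w₀ = (1,0). -/

import Mathlib

open MeasureTheory ProbabilityTheory Filter

section Aux
open Real Finset
open scoped NNReal ENNReal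


lemma exp_mul_gaussianPDFReal (m c x : ℝ) :
    Real.exp (c * x) * gaussianPDFReal m 1 x
      = Real.exp (c * m + c ^ 2 / 2) * gaussianPDFReal (m + c) 1 x := by
  simp only [gaussianPDFReal]
  rw [show ((1 : ℝ≥0) : ℝ) = (1 : ℝ) by norm_num]
  rw [mul_left_comm, mul_left_comm (Real.exp (c*m + c^2/2)), ← Real.exp_add, ← Real.exp_add]
  congr 1
  ring_nf

lemma gaussianReal_one_eq (m : ℝ) :
    gaussianReal m 1 = volume.withDensity (fun x => ENNReal.ofReal (gaussianPDFReal m 1 x)) := by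
  rw [gaussianReal_of_var_ne_zero m one_ne_zero]
  rfl

lemma integrable_exp_mul_gaussianReal (m c : ℝ) :
    Integrable (fun x => Real.exp (c * x)) (gaussianReal m 1) := by
  rw [gaussianReal_one_eq,
    integrable_withDensity_iff ((measurable_gaussianPDFReal m 1).ennreal_ofReal)
      (Filter.Eventually.of_forall fun x => ENNReal.ofReal_lt_top)]
  have : (fun x => Real.exp (c * x) * (ENNReal.ofReal (gaussianPDFReal m 1 x)).toReal)
      = fun x => Real.exp (c * m + c ^ 2 / 2) * gaussianPDFReal (m + c) 1 x := by
    funext x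
    rw [ENNReal.toReal_ofReal (gaussianPDFReal_nonneg m 1 x), exp_mul_gaussianPDFReal]
  rw [this]
  exact (integrable_gaussianPDFReal (m + c) 1).const_mul _

lemma integral_exp_mul_gaussianReal (m c : ℝ) :
    ∫ x, Real.exp (c * x) ∂(gaussianReal m 1) = Real.exp (c * m + c ^ 2 / 2) := by
  rw [gaussianReal_one_eq]
  have h1 : (fun x => ENNReal.ofReal (gaussianPDFReal m 1 x))
      = fun x => ((Real.toNNReal (gaussianPDFReal m 1 x) : ℝ≥0) : ℝ≥0∞) := rfl
  rw [h1, integral_withDensity_eq_integral_smul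
    ((measurable_gaussianPDFReal m 1).real_toNNReal)]
  have : (fun x => Real.toNNReal (gaussianPDFReal m 1 x) • Real.exp (c * x))
      = fun x => Real.exp (c * m + c ^ 2 / 2) * gaussianPDFReal (m + c) 1 x := by
    funext x
    rw [NNReal.smul_def, Real.coe_toNNReal _ (gaussianPDFReal_nonneg m 1 x), smul_eq_mul,
      mul_comm (gaussianPDFReal m 1 x) _, exp_mul_gaussianPDFReal]
  rw [this, integral_const_mul, integral_gaussianPDFReal_eq_one (m + c) one_ne_zero, mul_one]

lemma integrable_id_gaussianReal' (m : ℝ) :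
    Integrable (fun x : ℝ => x) (gaussianReal m 1) := by
  have h := (integrable_exp_mul_gaussianReal m 1).add (integrable_exp_mul_gaussianReal m (-1))
  refine h.mono' measurable_id.aestronglyMeasurable (Filter.Eventually.of_forall fun x => ?_)
  simp only [norm_eq_abs, Pi.add_apply, one_mul, neg_one_mul]
  rcases abs_cases x with ⟨h1, _⟩ | ⟨h1, _⟩ <;> rw [h1] <;>
    nlinarith [Real.add_one_le_exp x, Real.add_one_le_exp (-x), Real.exp_pos x, Real.exp_pos (-x)]

lemma integral_id_gaussianReal' (m : ℝ) :
    ∫ x, x ∂(gaussianReal m 1) = m := by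
  have hmap : gaussianReal m 1 = Measure.map (fun x => x + m) (gaussianReal 0 1) := by
    rw [gaussianReal_map_add_const, zero_add]
  have h0 : ∫ x, x ∂(gaussianReal 0 1) = 0 := by
    have hneg : Measure.map (fun x => (-1 : ℝ) * x) (gaussianReal 0 1) = gaussianReal 0 1 := by
      rw [gaussianReal_map_const_mul]
      norm_num
    have := integral_map (μ := gaussianReal 0 1) (φ := fun x => (-1 : ℝ) * x)
      (f := fun x : ℝ => x) (by fun_prop) (by rw [hneg]; exact measurable_id.aestronglyMeasurable)
    rw [hneg] at this
    simp only [neg_one_mul] at this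
    rw [integral_neg] at this
    linarith
  rw [hmap, integral_map (by fun_prop) (by rw [← hmap]; exact measurable_id.aestronglyMeasurable)]
  rw [integral_add (integrable_id_gaussianReal' 0) (integrable_const m)]
  simp [h0]


/-- exp is Lipschitz on `(-∞, B]` with constant `exp B`. -/
lemma abs_exp_sub_exp_le {a b B : ℝ} (ha : a ≤ B) (hb : b ≤ B) :
    |Real.exp a - Real.exp b| ≤ Real.exp B * |a - b| := by
  wlog h : b ≤ a generalizing a b
  · rw [abs_sub_comm, abs_sub_comm a b]; exact this hb ha (le_of_not_ge h)
  rw [abs_of_nonneg (sub_nonneg.2 (Real.exp_le_exp.2 h)), abs_of_nonneg (sub_nonneg.2 h)]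
  have hm : Real.exp (b - a) * Real.exp a = Real.exp b := by
    rw [← Real.exp_add]; ring_nf
  have h1 := mul_le_mul_of_nonneg_right (Real.add_one_le_exp (b - a)) (Real.exp_pos a).le
  rw [hm] at h1
  have h2 : Real.exp a * (a - b) ≤ Real.exp B * (a - b) :=
    mul_le_mul_of_nonneg_right (Real.exp_le_exp.2 ha) (by linarith)
  nlinarith

lemma one_sub_exp_le_abs_exp_sub_one {x a : ℝ} (ha : 0 < a) (hx : a ≤ |x|) :
    1 - Real.exp (-a) ≤ |Real.exp x - 1| := by
  rcases abs_cases x with ⟨h1, h2⟩ | ⟨h1, h2⟩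
  · have hax : a ≤ x := h1 ▸ hx
    have h3 : Real.exp a ≤ Real.exp x := Real.exp_le_exp.2 hax
    have h4 : Real.exp (-a) * Real.exp a = 1 := by rw [← Real.exp_add]; simp
    have h5 : (1:ℝ) ≤ Real.exp a := by rw [Real.one_le_exp_iff]; linarith
    rw [abs_of_nonneg (by nlinarith)]
    nlinarith [Real.exp_pos (-a)]
  · have hax : x ≤ -a := by linarith [h1 ▸ hx]
    have h3 : Real.exp x ≤ Real.exp (-a) := Real.exp_le_exp.2 hax
    have h6 : Real.exp (-a) < 1 := by rw [Real.exp_lt_one_iff]; linarith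
    rw [abs_of_nonpos (by linarith)]
    linarith

/-- If `u n / n → 0` and `u ≥ 0` then eventually `u j ≤ δ n` for all `j < n`. -/
lemma eventually_forall_lt_le_mul {u : ℕ → ℝ} (hu : ∀ n, 0 ≤ u n)
    (h : Filter.Tendsto (fun n => u n / n) Filter.atTop (nhds 0)) {δ : ℝ} (hδ : 0 < δ) :
    ∀ᶠ n : ℕ in Filter.atTop, ∀ j < n, u j ≤ δ * n := by
  have h2 : ∀ᶠ n : ℕ in Filter.atTop, u n / n < δ := h.eventually (eventually_lt_nhds hδ)
  obtain ⟨N, hN⟩ := Filter.eventually_atTop.1 h2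
  obtain ⟨C, hC⟩ : ∃ C : ℝ, ∀ j < N + 1, u j ≤ C :=
    ⟨((Finset.range (N+1)).image u).max' (by simp),
      fun j hj => Finset.le_max' _ _ (Finset.mem_image_of_mem u (Finset.mem_range.2 hj))⟩
  obtain ⟨M, hM⟩ := exists_nat_ge (C / δ)
  filter_upwards [Filter.eventually_ge_atTop (max (N+1) M)] with n hn j hj
  have hnN : N + 1 ≤ n := le_trans (le_max_left _ _) hn
  have hnM : (M : ℝ) ≤ n := by exact_mod_cast le_trans (le_max_right _ _) hn
  rcases lt_or_ge j (N + 1) with hjN | hjN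
  · calc u j ≤ C := hC j hjN
      _ ≤ δ * M := by rw [div_le_iff₀ hδ] at hM; linarith [mul_comm δ (M:ℝ)]
      _ ≤ δ * n := mul_le_mul_of_nonneg_left hnM hδ.le
  · have hj0 : (0:ℝ) < j := by
      have h1 : 1 ≤ j := by omega
      exact_mod_cast h1
    have h5 := hN j (by omega)
    rw [div_lt_iff₀ hj0] at h5
    have hjn : (j:ℝ) ≤ n := by exact_mod_cast hj.le
    nlinarith

/-- From Cesàro convergence of partial sums, the increments are `o(n)`. -/
lemma tendsto_div_of_sum_div {y : ℕ → ℝ} {L : ℝ}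
    (h : Filter.Tendsto (fun n => (∑ k ∈ Finset.range n, y k) / n) Filter.atTop (nhds L)) :
    Filter.Tendsto (fun n => y n / n) Filter.atTop (nhds 0) := by
  have h1 : Filter.Tendsto (fun n : ℕ => (∑ k ∈ Finset.range (n+1), y k) / ((n:ℝ)+1))
      Filter.atTop (nhds L) := by
    refine (h.comp (Filter.tendsto_add_atTop_nat 1)).congr fun n => ?_
    simp only [Function.comp_apply]
    norm_cast
  have h2 : Filter.Tendsto (fun n : ℕ => ((n:ℝ)+1) / n) Filter.atTop (nhds 1) := by
    have h2a := Filter.Tendsto.add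
      (tendsto_natCast_atTop_atTop (R := ℝ)).inv_tendsto_atTop
      (tendsto_const_nhds (x := (1:ℝ)) (f := Filter.atTop (α := ℕ)))
    rw [zero_add] at h2a
    refine h2a.congr' ?_
    filter_upwards [Filter.eventually_gt_atTop 0] with n hn
    have hn' : (n:ℝ) ≠ 0 := Nat.cast_ne_zero.2 hn.ne'
    field_simp
    rw [Pi.inv_apply, add_mul, inv_mul_cancel₀ hn']; ring
  have h3 : Filter.Tendsto (fun n : ℕ => (∑ k ∈ Finset.range (n+1), y k) / n)
      Filter.atTop (nhds L) := by
    have h3a := h1.mul h2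
    rw [mul_one] at h3a
    refine h3a.congr' ?_
    filter_upwards [Filter.eventually_gt_atTop 0] with n hn
    have hn' : (n:ℝ) ≠ 0 := Nat.cast_ne_zero.2 hn.ne'
    have hn1 : ((n:ℝ)+1) ≠ 0 := by positivity
    field_simp
  have h4 := h3.sub h
  rw [sub_self] at h4
  refine h4.congr' ?_
  filter_upwards [Filter.eventually_gt_atTop 0] with n hn
  rw [Finset.sum_range_succ]
  ring
lemma tendsto_div_sub_one {y : ℕ → ℝ} {L : ℝ}
    (h : Filter.Tendsto (fun n => (∑ k ∈ Finset.range n, y k) / n) Filter.atTop (nhds L)) :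
    Filter.Tendsto (fun n => (∑ k ∈ Finset.range n, y k) / ((n:ℝ) - 1))
      Filter.atTop (nhds L) := by
  have h2 : Filter.Tendsto (fun n : ℕ => (n:ℝ) / ((n:ℝ) - 1)) Filter.atTop (nhds 1) := by
    have ha : Filter.Tendsto (fun n : ℕ => (n:ℝ) - 1) Filter.atTop Filter.atTop :=
      Filter.tendsto_atTop_add_const_right _ (-1) tendsto_natCast_atTop_atTop
    have hb := ha.inv_tendsto_atTop
    have hc := hb.add (tendsto_const_nhds (x := (1:ℝ)) (f := Filter.atTop (α := ℕ)))
    rw [zero_add] at hc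
    refine hc.congr' ?_
    filter_upwards [Filter.eventually_ge_atTop 2] with n hn
    have hn1 : (n:ℝ) - 1 ≠ 0 := by
      have : (2:ℝ) ≤ n := by exact_mod_cast hn
      intro hcon; nlinarith
    field_simp
    simp only [Pi.inv_apply]; rw [add_mul, inv_mul_cancel₀ hn1]; ring
  have h3 := h.mul h2
  rw [mul_one] at h3
  refine h3.congr' ?_
  filter_upwards [Filter.eventually_ge_atTop 2] with n hn
  have h2n : (2:ℝ) ≤ n := by exact_mod_cast hn
  have hn0 : (n:ℝ) ≠ 0 := by intro hcon; nlinarith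
  have hn1 : (n:ℝ) - 1 ≠ 0 := by intro hcon; nlinarith
  field_simp

lemma loo_eventually {y : ℕ → ℝ} {Lv θ : ℝ} (hθ : 0 < θ)
    (h : Filter.Tendsto (fun n => (∑ k ∈ Finset.range n, y k) / n) Filter.atTop (nhds Lv)) :
    ∀ᶠ n : ℕ in Filter.atTop, ∀ j < n,
      |(1/((n:ℝ) - 1)) * ((∑ k ∈ Finset.range n, y k) - y j) - Lv| ≤ θ := by
  have hS1 := tendsto_div_sub_one h
  have hball : ∀ᶠ x : ℝ in nhds Lv, |x - Lv| < θ/2 := by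
    have := Metric.ball_mem_nhds Lv (half_pos hθ)
    filter_upwards [this] with x hx
    rwa [Metric.mem_ball, Real.dist_eq] at hx
  have hev1 := hS1.eventually hball
  have hy : Filter.Tendsto (fun n => |y n| / n) Filter.atTop (nhds 0) := by
    have h0 := (tendsto_div_of_sum_div h).abs
    rw [abs_zero] at h0
    refine h0.congr fun n => ?_
    rw [abs_div, Nat.abs_cast]
  have hev2 := eventually_forall_lt_le_mul (fun n => abs_nonneg (y n)) hy
    (show (0:ℝ) < θ/4 by linarith)
  filter_upwards [hev1, hev2, Filter.eventually_ge_atTop 2] with n e1 e2 hn2 j hj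
  have h2n : (2:ℝ) ≤ n := by exact_mod_cast hn2
  have hn1p : (0:ℝ) < (n:ℝ) - 1 := by linarith
  have hyj : |y j| ≤ (θ/2) * ((n:ℝ) - 1) := by
    have := e2 j hj
    nlinarith [hθ.le]
  have hre : (1/((n:ℝ) - 1)) * ((∑ k ∈ Finset.range n, y k) - y j) - Lv
      = ((∑ k ∈ Finset.range n, y k) / ((n:ℝ) - 1) - Lv) + (-(y j) / ((n:ℝ) - 1)) := by
    field_simp
    ring
  rw [hre]
  have ha := abs_add_le ((∑ k ∈ Finset.range n, y k) / ((n:ℝ) - 1) - Lv) (-(y j) / ((n:ℝ) - 1))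
  have hb : |(-(y j)) / ((n:ℝ) - 1)| ≤ θ/2 := by
    rw [abs_div, abs_neg, abs_of_pos hn1p, div_le_iff₀ hn1p]
    linarith
  linarith [e1.le]
lemma sq_diff_est {x e c ρ K : ℝ} (hx : 0 ≤ x) (he0 : 0 ≤ e) (heK : e ≤ K)
    (hc0 : 0 ≤ c) (hcK : c ≤ K) (hec : |e - c| ≤ ρ) :
    |(x - e)^2 - (x - c)^2| ≤ ρ * (2*x + 2*K) := by
  have h1 : (x - e)^2 - (x - c)^2 = (c - e) * (2*x - e - c) := by ring
  rw [h1, abs_mul]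
  have h2 : |c - e| ≤ ρ := by rwa [abs_sub_comm]
  have h3 : |2*x - e - c| ≤ 2*x + 2*K := by
    rw [abs_le]; constructor <;> linarith
  have hρ : 0 ≤ ρ := le_trans (abs_nonneg _) hec
  exact mul_le_mul h2 h3 (abs_nonneg _) hρ

set_option maxHeartbeats 2000000 in
lemma core_contradiction {n : ℕ} (hn : 2 ≤ n) {μ1 d : ℝ} (hd : d ≠ 0) {ε t θ : ℝ}
    (hε : 0 < ε) (X a1 a2 : ℕ → ℝ) (hX : ∀ j, 0 ≤ X j)
    (htε : ε ≤ |t|) (ht1 : |t| ≤ 1)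
    (hθ0 : 0 < θ) (hθ1 : θ ≤ 1)
    (hθ : θ * (2 * (Real.exp (μ1 + 1/2) * (Real.exp |d| + 1))
        + 6 * Real.exp (|μ1| + |d| + 1/2 + 3)
          * (2 * Real.exp (μ1 + 1/2) + 2 + 2 * Real.exp (|μ1| + |d| + 1/2 + 3)))
      < (Real.exp (μ1 + 1/2) * (1 - Real.exp (-(ε * |d|)))) ^ 2)
    (ha1 : ∀ j < n, |a1 j - μ1| ≤ θ) (ha2 : ∀ j < n, |a2 j - (μ1 + d)| ≤ θ)
    (hmean : |(∑ j ∈ Finset.range n, X j) / n - Real.exp (μ1 + 1/2)| ≤ θ)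
    (hminle : ∑ j ∈ Finset.range n, (X j - Real.exp (a1 j + t * (a2 j - a1 j) + 1/2))^2
        ≤ ∑ j ∈ Finset.range n, (X j - Real.exp (a1 j + 0 * (a2 j - a1 j) + 1/2))^2) :
    False := by
  set m : ℝ := Real.exp (μ1 + 1/2) with hm_def
  set B : ℝ := |μ1| + |d| + 1/2 + 3 with hB_def
  set K : ℝ := Real.exp B with hK_def
  set L : ℝ := m * (Real.exp |d| + 1) with hL_def
  set κ : ℝ := m * (1 - Real.exp (-(ε * |d|))) with hκ_def
  set ρ : ℝ := 3 * θ * K with hρ_def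
  clear_value m B K L κ ρ
  have hmpos : 0 < m := hm_def ▸ Real.exp_pos _
  have hKpos : 0 < K := hK_def ▸ Real.exp_pos _
  have hρpos : 0 < ρ := by rw [hρ_def]; positivity
  have hdabs : 0 < |d| := abs_pos.2 hd
  have hεd : 0 < ε * |d| := mul_pos hε hdabs
  have hκpos : 0 < κ := by
    have h1 : Real.exp (-(ε * |d|)) < 1 := Real.exp_lt_one_iff.2 (by linarith)
    rw [hκ_def]
    exact mul_pos hmpos (by linarith)
  have hn0 : (0:ℝ) < n := by
    have : (2:ℝ) ≤ n := by exact_mod_cast hn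
    linarith
  -- uniform approximation and bounds for the plug-in exponentials
  have key : ∀ s : ℝ, |s| ≤ 1 → ∀ j < n,
      |Real.exp (a1 j + s * (a2 j - a1 j) + 1/2) - Real.exp (μ1 + s * d + 1/2)| ≤ ρ
      ∧ Real.exp (a1 j + s * (a2 j - a1 j) + 1/2) ≤ K
      ∧ Real.exp (μ1 + s * d + 1/2) ≤ K := by
    intro s hs j hj
    have d1 := ha1 j hj
    have d2 := ha2 j hj
    have rd1 := abs_le.1 d1
    have rd2 := abs_le.1 d2
    have hd21 : |a2 j - a1 j| ≤ |d| + 2 * θ := by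
      have he : a2 j - a1 j = d + ((a2 j - (μ1 + d)) - (a1 j - μ1)) := by ring
      rw [he]
      have t1 := abs_add_le d ((a2 j - (μ1 + d)) - (a1 j - μ1))
      have t2 := abs_sub (a2 j - (μ1 + d)) (a1 j - μ1)
      linarith
    have hs21 : |s * (a2 j - a1 j)| ≤ |d| + 2 * θ := by
      rw [abs_mul]
      calc |s| * |a2 j - a1 j| ≤ 1 * (|d| + 2 * θ) :=
            mul_le_mul hs hd21 (abs_nonneg _) one_pos.le
        _ = |d| + 2 * θ := one_mul _
    have hsd : |s * d| ≤ |d| := by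
      rw [abs_mul]
      calc |s| * |d| ≤ 1 * |d| := mul_le_mul_of_nonneg_right hs (abs_nonneg d)
        _ = |d| := one_mul _
    have hA : a1 j + s * (a2 j - a1 j) + 1/2 ≤ B := by
      have e1 := le_abs_self μ1
      have e2 : s * (a2 j - a1 j) ≤ |d| + 2 * θ := le_trans (le_abs_self _) hs21
      rw [hB_def]; linarith
    have hBx : μ1 + s * d + 1/2 ≤ B := by
      have e2 : s * d ≤ |d| := le_trans (le_abs_self _) hsd
      have e1 := le_abs_self μ1
      rw [hB_def]; linarith
    have hdiff : |(a1 j + s * (a2 j - a1 j) + 1/2) - (μ1 + s * d + 1/2)| ≤ 3 * θ := by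
      have he : (a1 j + s * (a2 j - a1 j) + 1/2) - (μ1 + s * d + 1/2)
          = (a1 j - μ1) + s * ((a2 j - (μ1 + d)) - (a1 j - μ1)) := by ring
      rw [he]
      have t1 := abs_add_le (a1 j - μ1) (s * ((a2 j - (μ1 + d)) - (a1 j - μ1)))
      have t3 := abs_sub (a2 j - (μ1 + d)) (a1 j - μ1)
      have t4 : |s * ((a2 j - (μ1 + d)) - (a1 j - μ1))| ≤ 1 * (2 * θ) := by
        rw [abs_mul]
        exact mul_le_mul hs (by linarith) (abs_nonneg _) one_pos.le
      linarith
    refine ⟨?_, (Real.exp_le_exp.2 hA).trans_eq hK_def.symm,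
      (Real.exp_le_exp.2 hBx).trans_eq hK_def.symm⟩
    calc |Real.exp (a1 j + s * (a2 j - a1 j) + 1/2) - Real.exp (μ1 + s * d + 1/2)|
        ≤ Real.exp B * |(a1 j + s * (a2 j - a1 j) + 1/2) - (μ1 + s * d + 1/2)| :=
          abs_exp_sub_exp_le hA hBx
      _ ≤ Real.exp B * (3 * θ) := mul_le_mul_of_nonneg_left hdiff (Real.exp_pos B).le
      _ = ρ := by rw [hρ_def, hK_def]; ring
  -- notation
  set S : ℝ := ∑ j ∈ Finset.range n, X j with hS_def
  set xb : ℝ := S / n with hxb_def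
  set ct : ℝ := Real.exp (μ1 + t * d + 1/2) with hct_def
  clear_value S xb ct
  have hctpos : (0:ℝ) < ct := hct_def ▸ Real.exp_pos _
  have hzero : μ1 + 0 * d + 1/2 = μ1 + 1/2 := by ring
  -- per-term comparison
  have hstep : ∀ j ∈ Finset.range n,
      ((X j - ct)^2 - (X j - m)^2) - 2 * ρ * (2 * X j + 2 * K)
        ≤ (X j - Real.exp (a1 j + t * (a2 j - a1 j) + 1/2))^2
          - (X j - Real.exp (a1 j + 0 * (a2 j - a1 j) + 1/2))^2 := by
    intro j hj
    rw [Finset.mem_range] at hj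
    obtain ⟨k1, k2, k3⟩ := key t ht1 j hj
    obtain ⟨k1', k2', k3'⟩ := key 0 (by norm_num) j hj
    rw [hzero] at k1' k3'
    rw [← hct_def] at k1 k3
    rw [← hm_def] at k1' k3'
    have q1 := sq_diff_est (hX j) (Real.exp_pos _).le k2 hctpos.le k3 k1
    have q2 := sq_diff_est (hX j) (Real.exp_pos _).le k2' hmpos.le k3' k1'
    rw [abs_le] at q1 q2
    linarith [q1.1, q1.2, q2.1, q2.2]
  have hsum1 := Finset.sum_le_sum hstep
  have hLHS : ∑ j ∈ Finset.range n, (((X j - ct)^2 - (X j - m)^2) - 2 * ρ * (2 * X j + 2 * K))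
      = ((m - ct) * 2 - 4 * ρ) * S - ((m - ct) * (ct + m) + 4 * ρ * K) * n := by
    have hper : ∀ j ∈ Finset.range n,
        (((X j - ct)^2 - (X j - m)^2) - 2 * ρ * (2 * X j + 2 * K))
          = ((m - ct) * 2 - 4 * ρ) * X j - ((m - ct) * (ct + m) + 4 * ρ * K) :=
      fun j _ => by ring
    rw [Finset.sum_congr rfl hper, Finset.sum_sub_distrib, ← Finset.mul_sum,
      Finset.sum_const, Finset.card_range, nsmul_eq_mul, ← hS_def]
    ring
  have hRHS : ∑ j ∈ Finset.range n,
      ((X j - Real.exp (a1 j + t * (a2 j - a1 j) + 1/2))^2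
        - (X j - Real.exp (a1 j + 0 * (a2 j - a1 j) + 1/2))^2) ≤ 0 := by
    rw [Finset.sum_sub_distrib]
    linarith
  have E : ((m - ct) * 2 - 4 * ρ) * S - ((m - ct) * (ct + m) + 4 * ρ * K) * n ≤ 0 := by
    rw [← hLHS]; linarith
  have hnne : (n:ℝ) ≠ 0 := hn0.ne'
  have hring : (n:ℝ) * ((ct - m)^2 + 2 * (ct - m) * (m - xb) - 4 * ρ * (xb + K))
      = ((m - ct) * 2 - 4 * ρ) * S - ((m - ct) * (ct + m) + 4 * ρ * K) * n := by
    have hSxb : S = (n:ℝ) * xb := by rw [hxb_def]; field_simp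
    rw [hSxb]; ring
  have hbr : (ct - m)^2 + 2 * (ct - m) * (m - xb) - 4 * ρ * (xb + K) ≤ 0 := by
    by_contra hcon
    push_neg at hcon
    nlinarith [mul_pos hn0 hcon]
  clear hstep hsum1 hLHS hRHS E hring hminle key ha1 ha2 hX hS_def hxb_def
  -- bounds on Δ = ct - m
  have hΔfact : ct - m = m * (Real.exp (t * d) - 1) := by
    rw [hct_def, hm_def, show μ1 + t * d + 1/2 = (μ1 + 1/2) + t * d by ring, Real.exp_add]
    ring
  have habsΔ : |ct - m| = m * |Real.exp (t * d) - 1| := by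
    rw [hΔfact, abs_mul, abs_of_pos hmpos]
  have htd : |t * d| ≤ |d| := by
    rw [abs_mul]
    calc |t| * |d| ≤ 1 * |d| := mul_le_mul_of_nonneg_right ht1 (abs_nonneg d)
      _ = |d| := one_mul _
  have hlow : κ ≤ |ct - m| := by
    rw [habsΔ, hκ_def]
    refine mul_le_mul_of_nonneg_left ?_ hmpos.le
    refine one_sub_exp_le_abs_exp_sub_one hεd ?_
    rw [abs_mul]
    exact mul_le_mul htε le_rfl (abs_nonneg d) (abs_nonneg t)
  have hLnn : 0 ≤ L := by
    rw [hL_def]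
    exact mul_nonneg hmpos.le (by positivity)
  have hup : |ct - m| ≤ L := by
    rw [habsΔ, hL_def]
    refine mul_le_mul_of_nonneg_left ?_ hmpos.le
    rw [abs_le]
    have h1 : Real.exp (t * d) ≤ Real.exp |d| :=
      Real.exp_le_exp.2 (le_trans (le_abs_self _) htd)
    constructor
    · nlinarith [Real.exp_pos (t * d), Real.exp_pos |d|]
    · linarith
  have hκ2 : κ^2 ≤ (ct - m)^2 := by
    nlinarith [hlow, hκpos, abs_nonneg (ct - m), sq_abs (ct - m)]
  have hmxb : |m - xb| ≤ θ := by
    rw [abs_sub_comm]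
    exact hmean
  have h2Δ : -(2 * L * θ) ≤ 2 * (ct - m) * (m - xb) := by
    have habs : |2 * (ct - m) * (m - xb)| ≤ 2 * L * θ := by
      rw [abs_mul, abs_mul, abs_two]
      have h2 := mul_le_mul hup hmxb (abs_nonneg _) hLnn
      nlinarith [abs_nonneg (ct - m), abs_nonneg (m - xb)]
    linarith [neg_abs_le (2 * (ct - m) * (m - xb))]
  have hxbθ : xb ≤ m + θ := by
    have := (abs_le.1 hmean).2
    linarith
  have hρ4 : 4 * ρ * (xb + K) ≤ 4 * ρ * (m + 1 + K) :=
    mul_le_mul_of_nonneg_left (by linarith) (by linarith)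
  have heq : θ * (2 * L + 6 * K * (2 * m + 2 + 2 * K)) = 2 * L * θ + 4 * (3 * θ * K) * (m + 1 + K) := by
    ring
  have heq2 : 4 * ρ * (m + 1 + K) = 4 * (3 * θ * K) * (m + 1 + K) := by rw [hρ_def]
  linarith [hκ2, hbr, h2Δ, hρ4, hθ]
end Aux

noncomputable def looM {Ω : Type*} (Y : ℕ → Ω → ℝ) (n j : ℕ) (ω : Ω) : ℝ :=
  (1 / ((n : ℝ) - 1)) * ∑ k ∈ (Finset.range n).erase j, Y k ω

noncomputable def Dln {Ω : Type*} (Y1 Y2 : ℕ → Ω → ℝ) (n : ℕ) (t : ℝ) (ω : Ω) : ℝ :=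
  ∑ j ∈ Finset.range n,
    (Real.exp (Y1 j ω)
      - Real.exp (looM Y1 n j ω + t * (looM Y2 n j ω - looM Y1 n j ω) + 1 / 2)) ^ 2

set_option maxHeartbeats 1000000 in
theorem stmt_14 {Ω : Type*} [MeasurableSpace Ω] (μ : Measure Ω) [IsProbabilityMeasure μ]
    (μ1 μ2 : ℝ) (hne : μ1 ≠ μ2)
    (Y : Fin 2 → ℕ → Ω → ℝ)
    (hmeas : ∀ i j, Measurable (Y i j))
    (hindep : iIndepFun (fun p : Fin 2 × ℕ => Y p.1 p.2) μ)
    (hdist1 : ∀ j, Measure.map (Y 0 j) μ = gaussianReal μ1 1)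
    (hdist2 : ∀ j, Measure.map (Y 1 j) μ = gaussianReal μ2 1)
    (l2 : ℕ → Ω → ℝ)
    (hml : ∀ n, Measurable (l2 n))
    (hmin : ∀ n, 2 ≤ n → ∀ ω, l2 n ω ∈ Set.Icc (-1 : ℝ) 1
        ∧ ∀ t ∈ Set.Icc (-1 : ℝ) 1, Dln (Y 0) (Y 1) n (l2 n ω) ω ≤ Dln (Y 0) (Y 1) n t ω) :
    ∀ ε : ℝ, 0 < ε → Tendsto (fun n => μ {ω | ε ≤ |l2 n ω|}) atTop (nhds 0) := by
  have hd : μ2 - μ1 ≠ 0 := sub_ne_zero.2 (Ne.symm hne)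
  -- strong laws
  have slln : ∀ (i : Fin 2) (mi : ℝ), (∀ j, Measure.map (Y i j) μ = gaussianReal mi 1) →
      (∀ᵐ ω ∂μ, Tendsto (fun n => (∑ k ∈ Finset.range n, Y i k ω) / n) atTop (nhds mi))
      ∧ (∀ᵐ ω ∂μ, Tendsto (fun n => (∑ k ∈ Finset.range n, Real.exp (Y i k ω)) / n) atTop
          (nhds (Real.exp (mi + 1/2)))) := by
    intro i mi hdist
    have hpair : Pairwise (Function.onFun (IndepFun · · μ) (Y i)) := by
      intro a b hab
      exact hindep.indepFun (show ((i, a) : Fin 2 × ℕ) ≠ (i, b) by simp [Prod.ext_iff, hab])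
    have hident : ∀ j, IdentDistrib (Y i j) (Y i 0) μ μ := fun j =>
      ⟨(hmeas i j).aemeasurable, (hmeas i 0).aemeasurable, by rw [hdist j, hdist 0]⟩
    constructor
    · have hint : Integrable (Y i 0) μ := by
        have h := integrable_map_measure (μ := μ) (f := Y i 0) (g := fun x : ℝ => x)
          measurable_id.aestronglyMeasurable (hmeas i 0).aemeasurable
        rw [hdist 0] at h
        exact h.1 (integrable_id_gaussianReal' mi)
      have hEY : μ[Y i 0] = mi := by
        have h := integral_map (μ := μ) (φ := Y i 0) (f := fun x : ℝ => x)
          (hmeas i 0).aemeasurable measurable_id.aestronglyMeasurable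
        rw [hdist 0, integral_id_gaussianReal' mi] at h
        exact h.symm
      have h := strong_law_ae (μ := μ) (Y i) hint hpair hident
      rw [hEY] at h
      filter_upwards [h] with ω hω
      refine hω.congr fun n => ?_
      rw [smul_eq_mul, div_eq_inv_mul]
    · have hpairX : Pairwise (Function.onFun (IndepFun · · μ) (fun j (ω : Ω) => Real.exp (Y i j ω))) :=
        fun a b hab => (hpair hab).comp Real.measurable_exp Real.measurable_exp
      have hidentX : ∀ j, IdentDistrib (fun ω => Real.exp (Y i j ω))
          (fun ω => Real.exp (Y i 0 ω)) μ μ := fun j => (hident j).comp Real.measurable_exp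
      have hintX : Integrable (fun ω => Real.exp (Y i 0 ω)) μ := by
        have h := integrable_map_measure (μ := μ) (f := Y i 0) (g := fun x : ℝ => Real.exp x)
          Real.measurable_exp.aestronglyMeasurable (hmeas i 0).aemeasurable
        rw [hdist 0] at h
        refine h.1 ?_
        have := integrable_exp_mul_gaussianReal mi 1
        simpa using this
      have hEX : μ[fun ω => Real.exp (Y i 0 ω)] = Real.exp (mi + 1/2) := by
        have h := integral_map (μ := μ) (φ := Y i 0) (f := fun x : ℝ => Real.exp x)
          (hmeas i 0).aemeasurable Real.measurable_exp.aestronglyMeasurable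
        rw [hdist 0] at h
        have h2 := integral_exp_mul_gaussianReal mi 1
        simp only [one_mul, one_pow] at h2
        rw [h2] at h
        rw [← h]
      have h := strong_law_ae (μ := μ) _ hintX hpairX hidentX
      rw [hEX] at h
      filter_upwards [h] with ω hω
      refine hω.congr fun n => ?_
      rw [smul_eq_mul, div_eq_inv_mul]
  obtain ⟨hA1, hA3⟩ := slln 0 μ1 hdist1
  obtain ⟨hA2, _⟩ := slln 1 μ2 hdist2
  -- a.e. convergence of the minimizer to 0
  have hae : ∀ᵐ ω ∂μ, Tendsto (fun n => l2 n ω) atTop (nhds 0) := by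
    filter_upwards [hA1, hA2, hA3] with ω g1 g2 g3
    rw [NormedAddCommGroup.tendsto_nhds_zero]
    intro ε hε
    -- constants
    set d : ℝ := μ2 - μ1 with hd_def
    set m : ℝ := Real.exp (μ1 + 1/2) with hm_def
    set K : ℝ := Real.exp (|μ1| + |d| + 1/2 + 3) with hK_def
    set L : ℝ := m * (Real.exp |d| + 1) with hL_def
    set κ : ℝ := m * (1 - Real.exp (-(ε * |d|))) with hκ_def
    set Dm : ℝ := 2 * L + 6 * K * (2 * m + 2 + 2 * K) with hDm_def
    have hmpos : 0 < m := Real.exp_pos _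
    have hKpos : 0 < K := Real.exp_pos _
    have hLpos : 0 < L := mul_pos hmpos (by positivity)
    have hdabs : 0 < |d| := abs_pos.2 hd
    have hκpos : 0 < κ := by
      have h1 : Real.exp (-(ε * |d|)) < 1 :=
        Real.exp_lt_one_iff.2 (by nlinarith)
      exact mul_pos hmpos (by linarith)
    have hDmpos : 0 < Dm := by positivity
    set θ : ℝ := min 1 (κ^2 / (Dm + 1)) with hθ_def
    have hθ0 : 0 < θ := lt_min one_pos (by positivity)
    have hθ1 : θ ≤ 1 := min_le_left _ _
    have hθlt : θ * Dm < κ^2 := by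
      have h1 : θ ≤ κ^2 / (Dm + 1) := min_le_right _ _
      have h2 : θ * (Dm + 1) ≤ κ^2 := (le_div_iff₀ (by positivity)).1 h1
      nlinarith
    -- eventual bounds
    have ev1 := loo_eventually (y := fun k => Y 0 k ω) (by linarith : (0:ℝ) < θ) g1
    have ev2 := loo_eventually (y := fun k => Y 1 k ω) (by linarith : (0:ℝ) < θ) g2
    have hball : ∀ᶠ x : ℝ in nhds (Real.exp (μ1 + 1/2)), |x - Real.exp (μ1 + 1/2)| ≤ θ := by
      filter_upwards [Metric.ball_mem_nhds (Real.exp (μ1 + 1/2)) hθ0] with x hx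
      rw [Metric.mem_ball, Real.dist_eq] at hx
      exact hx.le
    have ev3 := g3.eventually hball
    filter_upwards [ev1, ev2, ev3, Filter.eventually_ge_atTop 2] with n e1 e2 e3 hn2
    rw [Real.norm_eq_abs]
    by_contra hcon
    push_neg at hcon
    obtain ⟨hIcc, hminp⟩ := hmin n hn2 ω
    have ht1 : |l2 n ω| ≤ 1 := abs_le.2 hIcc
    -- leave-one-out means in explicit form
    have hloo : ∀ (i : Fin 2) (j : ℕ), j < n → looM (Y i) n j ω
        = (1/((n:ℝ) - 1)) * ((∑ k ∈ Finset.range n, Y i k ω) - Y i j ω) := by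
      intro i j hj
      rw [looM, Finset.sum_erase_eq_sub (Finset.mem_range.2 hj)]
    have ha1 : ∀ j < n, |looM (Y 0) n j ω - μ1| ≤ θ := by
      intro j hj
      rw [hloo 0 j hj]
      exact e1 j hj
    have hmu : μ1 + d = μ2 := by rw [hd_def]; ring
    have ha2 : ∀ j < n, |looM (Y 1) n j ω - (μ1 + d)| ≤ θ := by
      intro j hj
      rw [hloo 1 j hj, hmu]
      exact e2 j hj
    have hminle := hminp 0 (by constructor <;> norm_num)
    simp only [Dln] at hminle
    exact core_contradiction hn2 hd hε
      (fun j => Real.exp (Y 0 j ω)) (fun j => looM (Y 0) n j ω) (fun j => looM (Y 1) n j ω)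
      (fun j => (Real.exp_pos _).le) hcon ht1 hθ0 hθ1 hθlt
      ha1 ha2 e3 hminle
  -- from a.e. convergence to convergence in probability
  intro ε hε
  have hTIM := tendstoInMeasure_of_tendsto_ae (f := l2) (g := fun _ => (0:ℝ))
    (fun n => (hml n).aestronglyMeasurable) hae
  have h := hTIM (ENNReal.ofReal ε) (ENNReal.ofReal_pos.2 hε)
  refine h.congr fun n => ?_
  congr 1
  ext x
  simp [Real.enorm_eq_ofReal_abs, ENNReal.ofReal_le_ofReal_iff (abs_nonneg _)]
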